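/- Let B be an ordered category with finitely many objects and finite automorphism groups, such that its additive cover ac(B) admits finite products. Then every morphism in B is an epimorphism. -/

import Mathlib

open CategoryTheory Limits

universe v u

/-- Objects of the additive cover `ac(B)`: finite families of `B`-objects. -/
structure ACObj (B : Type u) : Type (u + 1) where
  I : Type
  [fin : Finite I]
  obj : I → B

attribute [instance] ACObj.fin

/-- Morphisms of the additive cover: an index map together with a family of
`B`-morphisms. -/
structure ACHom {B : Type u} [Category.{v} B] (X Y : ACObj B) where
  f : X.I → Y.I
  φ : ∀ j : X.I, X.obj j ⟶ Y.obj (f j)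

/-- The additive cover `ac(B)` of a category `B`. -/
instance ACCategory (B : Type u) [Category.{v} B] : Category (ACObj B) where
  Hom := ACHom
  id X := ⟨fun j => j, fun j => 𝟙 _⟩
  comp {X Y Z} g h := ⟨fun j => h.f (g.f j), fun j => g.φ j ≫ h.φ (g.f j)⟩
  id_comp f := by
    cases f with
    | mk ff φ => simp only [Category.id_comp]
  comp_id f := by
    cases f with
    | mk ff φ => simp only [Category.comp_id]
  assoc f g h := by
    cases f; cases g; cases h; simp only [Category.assoc]

section Aux

variable {B : Type u} [Category.{v} B]

lemma AC_comp_f {X Y Z : ACObj B} (a : X ⟶ Y) (b : Y ⟶ Z) (j : X.I) :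
    ACHom.f (a ≫ b) j = ACHom.f b (ACHom.f a j) := rfl

lemma AC_comp_φ {X Y Z : ACObj B} (a : X ⟶ Y) (b : Y ⟶ Z) (j : X.I) :
    ACHom.φ (a ≫ b) j = ACHom.φ a j ≫ ACHom.φ b (ACHom.f a j) := rfl

lemma AC_id_φ (X : ACObj B) (j : X.I) : ACHom.φ (𝟙 X) j = 𝟙 (X.obj j) := rfl

lemma AC_phi_eq {X Y : ACObj B} {a b : X ⟶ Y} (h : a = b) (j : X.I) :
    ACHom.φ a j = ACHom.φ b j ≫ eqToHom (by rw [h]) := by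
  subst h; simp

lemma AC_transport {ι : Type} (obj : ι → B) {S : B} (φ : ∀ j : ι, obj j ⟶ S)
    {a b : ι} (hab : a = b) :
    eqToHom (congrArg obj hab) ≫ φ b = φ a := by
  subst hab; simp

end Aux

/-- If `B` is an ordered category with finitely many objects and finite
automorphism groups whose additive cover `ac(B)` admits binary products, then
every morphism of `B` is an epimorphism. -/
theorem epi_of_multiplicative
    {B : Type u} [Category.{v} B] [Finite B]
    (hfinAut : ∀ Q : B, Finite (Q ⟶ Q))
    (hord : ∀ Q R : B, Nonempty (R ⟶ Q) → Nonempty (Q ⟶ R) →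
      ∀ f : R ⟶ Q, IsIso f)
    [HasBinaryProducts (ACObj B)] :
    ∀ {Q R : B} (f : Q ⟶ R), Epi f := by
  intro Q R f
  refine ⟨fun {S} u v h => ?_⟩
  let sQ : ACObj B := ⟨PUnit, fun _ => Q⟩
  let sR : ACObj B := ⟨PUnit, fun _ => R⟩
  let sS : ACObj B := ⟨PUnit, fun _ => S⟩
  let ε : sQ ⟶ sR := ⟨fun j => j, fun _ => f⟩
  let U : sR ⟶ sS := ⟨fun j => j, fun _ => u⟩
  let V : sR ⟶ sS := ⟨fun j => j, fun _ => v⟩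
  let Pr : ACObj B := sS ⨯ sS
  let W : sR ⟶ Pr := prod.lift U V
  let δ : sS ⟶ Pr := prod.lift (𝟙 sS) (𝟙 sS)
  have hUV : ε ≫ U = ε ≫ V :=
    congrArg (fun g => (⟨fun j => j, fun _ => g⟩ : sQ ⟶ sS)) h
  have key : ε ≫ W = (ε ≫ U) ≫ δ := by
    apply Limits.prod.hom_ext
    · simp [W, δ, hUV]
    · simp [W, δ, hUV]
  -- indices
  have hi : ACHom.f δ PUnit.unit = ACHom.f W PUnit.unit := by
    have := congrArg (fun (g : sQ ⟶ Pr) => ACHom.f g PUnit.unit) key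
    exact this.symm
  let i : Pr.I := ACHom.f W PUnit.unit
  let i₀ : Pr.I := ACHom.f δ PUnit.unit
  let p : ∀ j : Pr.I, Pr.obj j ⟶ S := fun j => ACHom.φ (prod.fst : Pr ⟶ sS) j
  let q : ∀ j : Pr.I, Pr.obj j ⟶ S := fun j => ACHom.φ (prod.snd : Pr ⟶ sS) j
  let d : S ⟶ Pr.obj i₀ := ACHom.φ δ PUnit.unit
  let d' : S ⟶ Pr.obj i := d ≫ eqToHom (congrArg Pr.obj hi)
  let w : R ⟶ Pr.obj i := ACHom.φ W PUnit.unit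
  -- d' is a section of both projections at index i
  have hdp : d' ≫ p i = 𝟙 S := by
    have h1 := AC_phi_eq (prod.lift_fst (𝟙 sS) (𝟙 sS)) PUnit.unit
    rw [AC_comp_φ] at h1
    calc d' ≫ p i = d ≫ (eqToHom (congrArg Pr.obj hi) ≫ p i) := by
            simp [d', Category.assoc]
      _ = d ≫ p i₀ := by rw [AC_transport Pr.obj p hi]
      _ = 𝟙 S := by
            have := h1
            simp only [AC_id_φ] at this
            rw [this]; simp; rfl
  have hdq : d' ≫ q i = 𝟙 S := by
    have h1 := AC_phi_eq (prod.lift_snd (𝟙 sS) (𝟙 sS)) PUnit.unit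
    rw [AC_comp_φ] at h1
    calc d' ≫ q i = d ≫ (eqToHom (congrArg Pr.obj hi) ≫ q i) := by
            simp [d', Category.assoc]
      _ = d ≫ q i₀ := by rw [AC_transport Pr.obj q hi]
      _ = 𝟙 S := by
            have := h1
            simp only [AC_id_φ] at this
            rw [this]; simp; rfl
  -- w composed with the projections gives u and v
  have hwp : w ≫ p i = u := by
    have h1 := AC_phi_eq (prod.lift_fst U V) PUnit.unit
    rw [AC_comp_φ] at h1
    have : w ≫ p i = u ≫ eqToHom (by rfl) := h1
    simpa using this
  have hwq : w ≫ q i = v := by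
    have h1 := AC_phi_eq (prod.lift_snd U V) PUnit.unit
    rw [AC_comp_φ] at h1
    have : w ≫ q i = v ≫ eqToHom (by rfl) := h1
    simpa using this
  -- projections at index i are isomorphisms
  haveI ip : IsIso (p i) := hord S (Pr.obj i) ⟨p i⟩ ⟨d'⟩ (p i)
  haveI iq : IsIso (q i) := hord S (Pr.obj i) ⟨q i⟩ ⟨d'⟩ (q i)
  have hd1 : d' = inv (p i) := by
    have := congrArg (fun g => g ≫ inv (p i)) hdp
    simpa using this
  haveI : IsIso d' := by rw [hd1]; infer_instance
  haveI : Epi d' := IsIso.epi_of_iso d'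
  have hpq : p i = q i := (cancel_epi d').mp (hdp.trans hdq.symm)
  rw [← hwp, ← hwq, hpq]
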